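/- Let γ > 0 and let K be an m×n real matrix such that γ(A − BK) is Schur stable. Then there exists a unique real symmetric n×n matrix P satisfying the scaled Lyapunov equation γ²(A − BK)ᵀP(A − BK) − P + Q + KᵀRK = 0, and this P is positive definite. -/

import Mathlib

open Matrix

/-- A real square matrix is Schur stable if every eigenvalue of it, viewed as a
complex matrix, has modulus strictly less than `1`. -/
def SchurStable {n : ℕ} (M : Matrix (Fin n) (Fin n) ℝ) : Prop :=
  ∀ μ ∈ spectrum ℂ (M.map (algebraMap ℝ ℂ)), ‖μ‖ < 1

open Filter Topology
open scoped ENNReal NNReal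

attribute [local instance] Matrix.linftyOpNormedAddCommGroup Matrix.linftyOpNormedRing
  Matrix.linftyOpNormedAlgebra Matrix.linftyOpNormedSpace

private lemma nnnorm_map_complex {n : ℕ} (A : Matrix (Fin n) (Fin n) ℝ) :
    ‖A.map (algebraMap ℝ ℂ)‖₊ = ‖A‖₊ := by
  simp only [Matrix.linfty_opNNNorm_def, Matrix.map_apply]
  congr 1
  ext i
  congr 1
  ext j
  simp [Complex.nnnorm_real]

private lemma schurStable_transpose {n : ℕ} {M : Matrix (Fin n) (Fin n) ℝ}
    (h : SchurStable M) : SchurStable Mᵀ := by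
  intro μ hμ
  apply h μ
  rw [spectrum.mem_iff] at hμ ⊢
  intro hu
  apply hμ
  have heq : algebraMap ℂ (Matrix (Fin n) (Fin n) ℂ) μ - Mᵀ.map (algebraMap ℝ ℂ) =
      (algebraMap ℂ (Matrix (Fin n) (Fin n) ℂ) μ - M.map (algebraMap ℝ ℂ))ᵀ := by
    have h1 : (algebraMap ℂ (Matrix (Fin n) (Fin n) ℂ)) μ
        = ((algebraMap ℂ (Matrix (Fin n) (Fin n) ℂ)) μ)ᵀ := by
      rw [Algebra.algebraMap_eq_smul_one, transpose_smul, transpose_one]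
    rw [transpose_sub, Matrix.transpose_map, ← h1]
  rw [heq]
  rw [Matrix.isUnit_iff_isUnit_det] at hu ⊢
  rwa [det_transpose]

private lemma schur_pow_decay {n : ℕ} (M : Matrix (Fin n) (Fin n) ℝ) (h : SchurStable M) :
    ∃ r : ℝ, 0 ≤ r ∧ r < 1 ∧ ∀ᶠ k in atTop, ‖M ^ k‖ ≤ r ^ k := by
  rcases Nat.eq_zero_or_pos n with hn | hn
  · refine ⟨0, le_refl _, one_pos, ?_⟩
    subst hn
    refine Filter.eventually_atTop.mpr ⟨1, fun k hk => ?_⟩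
    have hM : M ^ k = 0 := Subsingleton.elim _ _
    rw [hM, norm_zero]
    positivity
  · haveI : Nonempty (Fin n) := Fin.pos_iff_nonempty.mp hn
    set Mc := M.map (algebraMap ℝ ℂ) with hMc
    have hρ : spectralRadius ℂ Mc < 1 := by
      have := spectrum.spectralRadius_lt_of_forall_lt (a := Mc) (r := 1)
        (fun z hz => by have h1 := h z hz; rw [← coe_nnnorm] at h1; exact_mod_cast h1)
      simpa using this
    obtain ⟨r, hr1, hr2⟩ := ENNReal.lt_iff_exists_nnreal_btwn.mp hρ
    have hr2' : (r : ℝ) < 1 := by exact_mod_cast hr2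
    have hG := spectrum.pow_nnnorm_pow_one_div_tendsto_nhds_spectralRadius Mc
    have hev : ∀ᶠ k : ℕ in atTop, ((‖Mc ^ k‖₊ : ℝ≥0∞) ^ (1 / (k : ℝ))) < r :=
      hG.eventually_lt_const hr1
    refine ⟨r, r.coe_nonneg, hr2', ?_⟩
    filter_upwards [hev, Filter.eventually_gt_atTop 0] with k hk hk0
    have hk0' : (k : ℝ) ≠ 0 := Nat.cast_ne_zero.mpr hk0.ne'
    have hb : (‖Mc ^ k‖₊ : ℝ≥0∞) ≤ (r : ℝ≥0∞) ^ (k : ℝ) := by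
      calc (‖Mc ^ k‖₊ : ℝ≥0∞) = ((‖Mc ^ k‖₊ : ℝ≥0∞) ^ (1 / (k : ℝ))) ^ (k : ℝ) := by
            rw [← ENNReal.rpow_mul, one_div, inv_mul_cancel₀ hk0', ENNReal.rpow_one]
        _ ≤ (r : ℝ≥0∞) ^ (k : ℝ) := by
            apply ENNReal.rpow_le_rpow hk.le (Nat.cast_nonneg k)
    have hb' : ‖Mc ^ k‖₊ ≤ r ^ k := by
      rw [ENNReal.rpow_natCast, ← ENNReal.coe_pow, ENNReal.coe_le_coe] at hb
      exact hb
    have hnc : ‖Mc ^ k‖₊ = ‖M ^ k‖₊ := by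
      have : Mc ^ k = (M ^ k).map (algebraMap ℝ ℂ) := by
        rw [hMc, ← RingHom.mapMatrix_apply, ← RingHom.mapMatrix_apply, map_pow]
      rw [this, nnnorm_map_complex]
    rw [hnc] at hb'
    exact_mod_cast hb'

theorem stmt_4 {n m : ℕ}
    (A : Matrix (Fin n) (Fin n) ℝ) (B : Matrix (Fin n) (Fin m) ℝ)
    (Q : Matrix (Fin n) (Fin n) ℝ) (R : Matrix (Fin m) (Fin m) ℝ)
    (hQ : Q.PosSemidef) (hR : R.PosDef)
    (hObs : ∀ x : Fin n → ℝ, (∀ k : ℕ, Q.mulVec ((A ^ k).mulVec x) = 0) → x = 0)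
    (γ : ℝ) (hγ : 0 < γ)
    (K : Matrix (Fin m) (Fin n) ℝ)
    (hK : SchurStable (γ • (A - B * K))) :
    (∃! P : Matrix (Fin n) (Fin n) ℝ, P.IsSymm ∧
        γ ^ 2 • ((A - B * K)ᵀ * P * (A - B * K)) - P + Q + Kᵀ * R * K = 0) ∧
      (∀ P : Matrix (Fin n) (Fin n) ℝ, P.IsSymm →
        γ ^ 2 • ((A - B * K)ᵀ * P * (A - B * K)) - P + Q + Kᵀ * R * K = 0 →
        P.PosDef) := by
  classical
  set N : Matrix (Fin n) (Fin n) ℝ := γ • (A - B * K) with hN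
  set S : Matrix (Fin n) (Fin n) ℝ := Q + Kᵀ * R * K with hS
  -- the equation, rephrased
  have key : ∀ P : Matrix (Fin n) (Fin n) ℝ,
      Nᵀ * P * N = γ ^ 2 • ((A - B * K)ᵀ * P * (A - B * K)) := by
    intro P
    rw [hN, transpose_smul, smul_mul_assoc, smul_mul_assoc, mul_smul_comm, smul_smul, sq]
  have equiv : ∀ P : Matrix (Fin n) (Fin n) ℝ,
      (γ ^ 2 • ((A - B * K)ᵀ * P * (A - B * K)) - P + Q + Kᵀ * R * K = 0) ↔
        Nᵀ * P * N + S = P := by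
    intro P
    rw [← key, hS]
    constructor
    · intro h
      have h2 : Nᵀ * P * N + (Q + Kᵀ * R * K) - P = 0 := by
        rw [← h]; abel
      rw [sub_eq_zero] at h2
      exact h2
    · intro h
      have h2 : Nᵀ * P * N + (Q + Kᵀ * R * K) - P = 0 := by rw [h]; abel
      rw [← h2]; abel
  -- symmetry of S and PSD of S
  have hQsymm : Q.IsSymm := by
    have := hQ.1
    rwa [Matrix.IsHermitian, conjTranspose_eq_transpose_of_trivial] at this
  have hRsymm : Rᵀ = R := by
    have := hR.1
    rwa [Matrix.IsHermitian, conjTranspose_eq_transpose_of_trivial] at this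
  have hSsymm : S.IsSymm := by
    show Sᵀ = S
    rw [hS]
    simp [transpose_add, transpose_mul, transpose_transpose, hQsymm.eq, hRsymm,
      Matrix.mul_assoc]
  have hSpsd : S.PosSemidef := by
    rw [hS]
    have h2 : (Kᵀ * R * K).PosSemidef := by
      have := hR.posSemidef.conjTranspose_mul_mul_same K
      rwa [conjTranspose_eq_transpose_of_trivial] at this
    exact hQ.add h2
  -- decay of powers
  obtain ⟨r, hr0, hr1, hrev⟩ := schur_pow_decay N hK
  obtain ⟨r', hr'0, hr'1, hr'ev⟩ := schur_pow_decay Nᵀ (schurStable_transpose hK)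
  -- the candidate solution
  set f : ℕ → Matrix (Fin n) (Fin n) ℝ := fun k => (Nᵀ) ^ k * S * N ^ k with hf
  have hrr' : r' * r < 1 := by
    calc r' * r ≤ r' * 1 := by nlinarith
      _ < 1 := by rwa [mul_one]
  have hrr'0 : 0 ≤ r' * r := mul_nonneg hr'0 hr0
  have hfbound : ∀ᶠ k in atTop, ‖f k‖ ≤ ‖S‖ * (r' * r) ^ k := by
    filter_upwards [hrev, hr'ev] with k h1 h2
    calc ‖f k‖ ≤ ‖(Nᵀ) ^ k * S‖ * ‖N ^ k‖ := norm_mul_le _ _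
      _ ≤ ‖(Nᵀ) ^ k‖ * ‖S‖ * ‖N ^ k‖ :=
          mul_le_mul_of_nonneg_right (norm_mul_le _ _) (norm_nonneg _)
      _ ≤ r' ^ k * ‖S‖ * r ^ k := by
          refine mul_le_mul (mul_le_mul_of_nonneg_right h2 (norm_nonneg _)) h1
            (norm_nonneg _) ?_
          exact mul_nonneg (pow_nonneg hr'0 k) (norm_nonneg _)
      _ = ‖S‖ * (r' * r) ^ k := by rw [mul_pow]; ring
  have hfsum : Summable f := by
    apply Summable.of_norm_bounded_eventually_nat (g := fun k => ‖S‖ * (r' * r) ^ k)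
    · exact (summable_geometric_of_lt_one hrr'0 hrr').mul_left _
    · exact hfbound
  set P₀ : Matrix (Fin n) (Fin n) ℝ := ∑' k, f k with hP₀
  -- continuous linear maps we shall use
  have hcont : ∀ (L : Matrix (Fin n) (Fin n) ℝ →ₗ[ℝ] Matrix (Fin n) (Fin n) ℝ),
      Continuous L := fun L => L.continuous_of_finiteDimensional
  -- symmetry of P₀
  have hfsymm : ∀ k, (f k)ᵀ = f k := by
    intro k
    show ((Nᵀ) ^ k * S * N ^ k)ᵀ = (Nᵀ) ^ k * S * N ^ k
    simp [transpose_mul, ← transpose_pow, transpose_transpose, hSsymm.eq, Matrix.mul_assoc]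
  have hP₀symm : P₀.IsSymm := by
    let T : Matrix (Fin n) (Fin n) ℝ →ₗ[ℝ] Matrix (Fin n) (Fin n) ℝ :=
      { toFun := fun X => Xᵀ
        map_add' := fun X Y => transpose_add X Y
        map_smul' := fun c X => transpose_smul c X }
    have hT : Continuous T := hcont T
    have := hfsum.hasSum.map T hT
    rw [Matrix.IsSymm]
    have heq : P₀ᵀ = ∑' k, (f k)ᵀ := by
      exact (this.tsum_eq).symm
    rw [heq]
    simp only [hfsymm, hP₀]
  -- P₀ solves the fixed point equation
  have hμeq : ∀ k, Nᵀ * f k * N = f (k + 1) := by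
    intro k
    show Nᵀ * ((Nᵀ) ^ k * S * N ^ k) * N = (Nᵀ) ^ (k + 1) * S * N ^ (k + 1)
    rw [pow_succ' (Nᵀ) k, pow_succ N k]
    noncomm_ring
  have hfix : Nᵀ * P₀ * N + S = P₀ := by
    let L : Matrix (Fin n) (Fin n) ℝ →ₗ[ℝ] Matrix (Fin n) (Fin n) ℝ :=
      { toFun := fun X => Nᵀ * X * N
        map_add' := fun X Y => by noncomm_ring
        map_smul' := fun c X => by
          simp [smul_mul_assoc, mul_smul_comm] }
    have hL : Continuous L := hcont L
    have h1 : Nᵀ * P₀ * N = ∑' k, (Nᵀ * f k * N) := by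
      exact ((hfsum.hasSum.map L hL).tsum_eq).symm
    rw [h1]
    have h2 : ∑' k, (Nᵀ * f k * N) = ∑' k, f (k + 1) := by
      congr 1
      funext k
      exact hμeq k
    rw [h2]
    have h3 : P₀ = f 0 + ∑' k, f (k + 1) := Summable.tsum_eq_zero_add hfsum
    have h4 : f 0 = S := by rw [hf]; simp
    rw [h3, h4]
    abel
  -- uniqueness of solutions to the fixed point equation
  have huniq : ∀ P : Matrix (Fin n) (Fin n) ℝ, Nᵀ * P * N + S = P → P = P₀ := by
    intro P hP
    set D : Matrix (Fin n) (Fin n) ℝ := P - P₀ with hD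
    have hDfix : Nᵀ * D * N = D := by
      rw [hD, mul_sub, sub_mul]
      have := sub_eq_sub_iff_sub_eq_sub.mp (congrArg₂ (· - ·) hP hfix)
      calc Nᵀ * P * N - Nᵀ * P₀ * N = (Nᵀ * P * N + S) - (Nᵀ * P₀ * N + S) := by abel
        _ = P - P₀ := by rw [hP, hfix]
    have hDk : ∀ k : ℕ, D = (Nᵀ) ^ k * D * N ^ k := by
      intro k
      induction k with
      | zero => simp
      | succ k ih =>
        calc D = Nᵀ * D * N := hDfix.symm
          _ = Nᵀ * ((Nᵀ) ^ k * D * N ^ k) * N := by rw [← ih]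
          _ = (Nᵀ) ^ (k + 1) * D * N ^ (k + 1) := by
              rw [pow_succ' (Nᵀ) k, pow_succ N k]
              noncomm_ring
    have hlim : Tendsto (fun k : ℕ => ‖S‖ * 0 + ‖D‖ * (r' * r) ^ k) atTop (𝓝 0) := by
      have := (tendsto_pow_atTop_nhds_zero_of_lt_one hrr'0 hrr').const_mul ‖D‖
      simpa using this
    have hev : ∀ᶠ k in atTop, ‖D‖ ≤ ‖S‖ * 0 + ‖D‖ * (r' * r) ^ k := by
      filter_upwards [hrev, hr'ev] with k h1 h2
      have : ‖D‖ ≤ r' ^ k * ‖D‖ * r ^ k := by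
        calc ‖D‖ = ‖(Nᵀ) ^ k * D * N ^ k‖ := by rw [← hDk k]
          _ ≤ ‖(Nᵀ) ^ k‖ * ‖D‖ * ‖N ^ k‖ := by
              refine le_trans (norm_mul_le _ _) ?_
              exact mul_le_mul_of_nonneg_right (norm_mul_le _ _) (norm_nonneg _)
          _ ≤ r' ^ k * ‖D‖ * r ^ k := by
              refine mul_le_mul (mul_le_mul_of_nonneg_right h2 (norm_nonneg _)) h1
                (norm_nonneg _) ?_
              exact mul_nonneg (pow_nonneg hr'0 k) (norm_nonneg _)
      calc ‖D‖ ≤ r' ^ k * ‖D‖ * r ^ k := this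
        _ = ‖S‖ * 0 + ‖D‖ * (r' * r) ^ k := by rw [mul_pow]; ring
    have : ‖D‖ ≤ 0 := ge_of_tendsto hlim hev
    have hD0 : D = 0 := norm_le_zero_iff.mp this
    exact sub_eq_zero.mp hD0
  -- positive definiteness of P₀
  have hP₀pd : P₀.PosDef := by
    rw [posDef_iff_dotProduct_mulVec]; constructor
    · rwa [Matrix.IsHermitian, conjTranspose_eq_transpose_of_trivial]
    · intro x hx
      -- the quadratic form as a continuous linear functional applied to the tsum
      let φ : Matrix (Fin n) (Fin n) ℝ →ₗ[ℝ] ℝ :=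
        { toFun := fun X => x ⬝ᵥ X *ᵥ x
          map_add' := fun X Y => by simp [Matrix.add_mulVec, dotProduct_add]
          map_smul' := fun c X => by simp [Matrix.smul_mulVec, dotProduct_smul] }
      have hφ : Continuous φ := φ.continuous_of_finiteDimensional
      have hφsum : Summable (fun k => φ (f k)) := hfsum.map φ.toAddMonoidHom hφ
      have hφtsum : φ P₀ = ∑' k, φ (f k) := ((hfsum.hasSum.map φ hφ).tsum_eq).symm
      set y : ℕ → Fin n → ℝ := fun k => N ^ k *ᵥ x with hy
      have hterm : ∀ k, φ (f k) = y k ⬝ᵥ S *ᵥ y k := by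
        intro k
        show x ⬝ᵥ ((Nᵀ) ^ k * S * N ^ k) *ᵥ x = y k ⬝ᵥ S *ᵥ y k
        rw [← Matrix.mulVec_mulVec, ← Matrix.mulVec_mulVec, ← transpose_pow,
          Matrix.dotProduct_mulVec x, Matrix.vecMul_transpose]
      have htermnn : ∀ k, 0 ≤ φ (f k) := by
        intro k
        rw [hterm k]
        have := hSpsd.dotProduct_mulVec_nonneg (y k)
        simpa using this
      -- some term is positive
      have hpos : ∃ k, 0 < φ (f k) := by
        by_contra hcon
        push_neg at hcon
        have hzero : ∀ k, φ (f k) = 0 := fun k => le_antisymm (hcon k) (htermnn k)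
        -- from each zero term, deduce K *ᵥ y k = 0 and Q *ᵥ y k = 0
        have hsplit : ∀ k, Q *ᵥ y k = 0 ∧ K *ᵥ y k = 0 := by
          intro k
          have h0 := hzero k
          rw [hterm k] at h0
          have hdec : y k ⬝ᵥ S *ᵥ y k
              = y k ⬝ᵥ Q *ᵥ y k + (K *ᵥ y k) ⬝ᵥ R *ᵥ (K *ᵥ y k) := by
            rw [hS, Matrix.add_mulVec, dotProduct_add]
            congr 1
            rw [← Matrix.mulVec_mulVec, ← Matrix.mulVec_mulVec,
              Matrix.dotProduct_mulVec (y k), Matrix.vecMul_transpose]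
          rw [hdec] at h0
          have h1 : 0 ≤ y k ⬝ᵥ Q *ᵥ y k := by simpa using hQ.dotProduct_mulVec_nonneg (y k)
          have h2 : 0 ≤ (K *ᵥ y k) ⬝ᵥ R *ᵥ (K *ᵥ y k) := by
            simpa using hR.posSemidef.dotProduct_mulVec_nonneg (K *ᵥ y k)
          have hq0 : y k ⬝ᵥ Q *ᵥ y k = 0 := by linarith
          have hk0 : (K *ᵥ y k) ⬝ᵥ R *ᵥ (K *ᵥ y k) = 0 := by linarith
          constructor
          · have := (hQ.dotProduct_mulVec_zero_iff (y k)).mp (by simpa using hq0)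
            exact this
          · by_contra hKy
            have := hR.dotProduct_mulVec_pos hKy
            simp only [star_trivial] at this
            linarith
        -- hence y k = γ ^ k • (A ^ k *ᵥ x)
        have hyk : ∀ k, y k = γ ^ k • (A ^ k *ᵥ x) := by
          intro k
          induction k with
          | zero => simp [hy]
          | succ k ih =>
            have hstep : y (k + 1) = N *ᵥ y k := by
              rw [hy]
              show N ^ (k + 1) *ᵥ x = N *ᵥ (N ^ k *ᵥ x)
              rw [Matrix.mulVec_mulVec, ← pow_succ']
            rw [hstep, ih, hN]
            rw [Matrix.smul_mulVec, Matrix.mulVec_smul]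
            rw [Matrix.sub_mulVec]
            have hBK : (B * K) *ᵥ (A ^ k *ᵥ x) = 0 := by
              rw [← Matrix.mulVec_mulVec]
              have : K *ᵥ (A ^ k *ᵥ x) = 0 := by
                have := (hsplit k).2
                rw [ih] at this
                rw [Matrix.mulVec_smul] at this
                have hγk : γ ^ k ≠ 0 := pow_ne_zero k hγ.ne'
                rcases smul_eq_zero.mp this with h | h
                · exact absurd h hγk
                · exact h
              rw [this, Matrix.mulVec_zero]
            rw [hBK, sub_zero, smul_smul, Matrix.mulVec_mulVec,
              ← pow_succ', ← pow_succ']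
        -- contradiction with observability
        have hobsx : ∀ k : ℕ, Q.mulVec ((A ^ k).mulVec x) = 0 := by
          intro k
          have := (hsplit k).1
          rw [hyk k, Matrix.mulVec_smul] at this
          have hγk : γ ^ k ≠ 0 := pow_ne_zero k hγ.ne'
          rcases smul_eq_zero.mp this with h | h
          · exact absurd h hγk
          · exact h
        exact hx (hObs x hobsx)
      obtain ⟨k₀, hk₀⟩ := hpos
      have : 0 < φ P₀ := by
        rw [hφtsum]
        exact Summable.tsum_pos hφsum htermnn k₀ hk₀
      exact this
  refine ⟨⟨P₀, ⟨hP₀symm, (equiv P₀).mpr hfix⟩, ?_⟩, ?_⟩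
  · rintro P ⟨-, hPe⟩
    exact huniq P ((equiv P).mp hPe)
  · intro P _ hPe
    rw [huniq P ((equiv P).mp hPe)]
    exact hP₀pd
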